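/- For every integer j ≥ 11 there exists exactly one t ∈ (0,1) such that H_j(s) ≤ H_j(t) for all s ∈ (0,1); that is, H_j attains its absolute maximum over (0,1) at a unique point. -/

import Mathlib

open Real Set

private lemma aux_log3_gt_one : 1 < Real.log 3 := by
  rw [Real.lt_log_iff_exp_lt (by norm_num : (0:ℝ) < 3)]
  have := Real.exp_one_lt_d9
  linarith

private lemma aux_concave {c : ℝ} (hc : 1 ≤ c) :
    StrictConcaveOn ℝ (Set.Ioo (0:ℝ) 1)
      (fun t => c * Real.log t + Real.log (1 - t) +
        Real.log (Real.log 3 - Real.log (1 - t))) := by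
  set g2 : ℝ → ℝ := fun t =>
    c * t⁻¹ - (1 - t)⁻¹ + ((1 - t) * (Real.log 3 - Real.log (1 - t)))⁻¹ with hg2
  have hLgt : ∀ x ∈ Set.Ioo (0:ℝ) 1, 1 < Real.log 3 - Real.log (1 - x) := by
    intro x hx
    have h1 : Real.log (1 - x) < 0 := Real.log_neg (by linarith [hx.2]) (by linarith [hx.1])
    linarith [aux_log3_gt_one]
  have hder1 : ∀ x ∈ Set.Ioo (0:ℝ) 1,
      HasDerivAt (fun t => c * Real.log t + Real.log (1 - t) +
        Real.log (Real.log 3 - Real.log (1 - t))) (g2 x) x := by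
    intro x hx
    have hx0 : (0:ℝ) < x := hx.1
    have hu : (0:ℝ) < 1 - x := by linarith [hx.2]
    have hLx : 1 < Real.log 3 - Real.log (1 - x) := hLgt x hx
    have hL0 : Real.log 3 - Real.log (1 - x) ≠ 0 := by linarith
    have d1 : HasDerivAt (fun t : ℝ => 1 - t) (-1) x := (hasDerivAt_id x).const_sub 1
    have d2 : HasDerivAt (fun t : ℝ => Real.log (1 - t)) (-1 / (1 - x)) x :=
      d1.log hu.ne'
    have dlog : HasDerivAt (fun t : ℝ => c * Real.log t) (c * x⁻¹) x :=
      (Real.hasDerivAt_log hx0.ne').const_mul c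
    have dL : HasDerivAt (fun t : ℝ => Real.log 3 - Real.log (1 - t)) (-(-1 / (1 - x))) x :=
      d2.const_sub _
    have dlogL : HasDerivAt (fun t : ℝ => Real.log (Real.log 3 - Real.log (1 - t)))
        ((-(-1 / (1 - x))) / (Real.log 3 - Real.log (1 - x))) x :=
      dL.log hL0
    have dsum := (dlog.add d2).add dlogL
    convert dsum using 1
    all_goals try rfl
    try simp only [hg2]
    field_simp
    ring
  have hder2 : ∀ x ∈ Set.Ioo (0:ℝ) 1, ∃ D : ℝ, HasDerivAt g2 D x ∧ D < 0 := by
    intro x hx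
    have hx0 : (0:ℝ) < x := hx.1
    have hu : (0:ℝ) < 1 - x := by linarith [hx.2]
    set L : ℝ := Real.log 3 - Real.log (1 - x) with hLdef
    have hLx : 1 < L := hLgt x hx
    have hL0 : (0:ℝ) < L := by linarith
    have d1 : HasDerivAt (fun t : ℝ => 1 - t) (-1) x := (hasDerivAt_id x).const_sub 1
    have d2 : HasDerivAt (fun t : ℝ => Real.log (1 - t)) (-1 / (1 - x)) x :=
      d1.log hu.ne'
    have dL : HasDerivAt (fun t : ℝ => Real.log 3 - Real.log (1 - t)) (-(-1 / (1 - x))) x :=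
      d2.const_sub _
    have e1 : HasDerivAt (fun t : ℝ => c * t⁻¹) (c * (-(x ^ 2)⁻¹)) x :=
      (hasDerivAt_inv hx0.ne').const_mul c
    have e2 : HasDerivAt (fun t : ℝ => (1 - t)⁻¹) (-(-1) / (1 - x) ^ 2) x :=
      d1.inv hu.ne'
    have dP : HasDerivAt (fun t : ℝ => (1 - t) * (Real.log 3 - Real.log (1 - t)))
        ((-1) * L + (1 - x) * (-(-1 / (1 - x)))) x := d1.mul dL
    have hPne : (1 - x) * L ≠ 0 := by positivity
    have e3 : HasDerivAt (fun t : ℝ => ((1 - t) * (Real.log 3 - Real.log (1 - t)))⁻¹)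
        (-((-1) * L + (1 - x) * (-(-1 / (1 - x)))) / ((1 - x) * L) ^ 2) x :=
      dP.inv hPne
    refine ⟨_, (e1.sub e2).add e3, ?_⟩
    have key : c * (-(x ^ 2)⁻¹) - -(-1) / (1 - x) ^ 2 +
        -((-1) * L + (1 - x) * (-(-1 / (1 - x)))) / ((1 - x) * L) ^ 2
        = -(c / x ^ 2) - (L ^ 2 - L + 1) / ((1 - x) ^ 2 * L ^ 2) := by
      field_simp
      ring
    rw [key]
    have h1 : 0 < c / x ^ 2 := div_pos (by linarith) (by positivity)
    have h2 : 0 < (L ^ 2 - L + 1) / ((1 - x) ^ 2 * L ^ 2) :=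
      div_pos (by nlinarith) (by positivity)
    linarith
  refine strictConcaveOn_of_deriv2_neg (convex_Ioo 0 1)
    (fun x hx => (hder1 x hx).continuousAt.continuousWithinAt) (fun x hx => ?_)
  rw [interior_Ioo] at hx
  obtain ⟨D, hD, hDneg⟩ := hder2 x hx
  have hev : deriv (fun t => c * Real.log t + Real.log (1 - t) +
      Real.log (Real.log 3 - Real.log (1 - t))) =ᶠ[nhds x] g2 :=
    Filter.eventuallyEq_of_mem (Ioo_mem_nhds hx.1 hx.2) (fun y hy => (hder1 y hy).deriv)
  have : deriv^[2] (fun t => c * Real.log t + Real.log (1 - t) +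
      Real.log (Real.log 3 - Real.log (1 - t))) x = D := by
    change deriv (deriv _) x = D
    rw [hev.deriv_eq, hD.deriv]
  rw [this]
  exact hDneg

/-- For every integer `j ≥ 11`, the function
`H_j t = j * t^(j-1) * (1-t) * log (3/(1-t))` attains its absolute maximum
over `(0,1)` at exactly one point `t ∈ (0,1)`. -/
theorem stmt_4 (j : ℕ) (hj : 11 ≤ j) :
    ∃! t : ℝ, t ∈ Set.Ioo (0 : ℝ) 1 ∧
      ∀ s ∈ Set.Ioo (0 : ℝ) 1,
        (j : ℝ) * s ^ (j - 1) * (1 - s) * Real.log (3 / (1 - s)) ≤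
        (j : ℝ) * t ^ (j - 1) * (1 - t) * Real.log (3 / (1 - t)) := by
  have hj1 : (1:ℝ) ≤ (j:ℝ) - 1 := by
    have : (11:ℝ) ≤ (j:ℝ) := by exact_mod_cast hj
    linarith
  have hjpos : (0:ℝ) < (j:ℝ) := by linarith
  set H : ℝ → ℝ := fun t => (j : ℝ) * t ^ (j - 1) * (1 - t) * Real.log (3 / (1 - t))
    with hHdef
  have hdiv : ∀ t ∈ Set.Ioo (0:ℝ) 1,
      Real.log (3 / (1 - t)) = Real.log 3 - Real.log (1 - t) := by
    intro t ht
    have h1t : (0:ℝ) < 1 - t := by linarith [ht.2]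
    exact Real.log_div (by norm_num) h1t.ne'
  have hLgt : ∀ t ∈ Set.Ioo (0:ℝ) 1, 1 < Real.log (3 / (1 - t)) := by
    intro t ht
    rw [hdiv t ht]
    have h1 : Real.log (1 - t) < 0 :=
      Real.log_neg (by linarith [ht.2]) (by linarith [ht.1])
    linarith [aux_log3_gt_one]
  have hHpos : ∀ t ∈ Set.Ioo (0:ℝ) 1, 0 < H t := by
    intro t ht
    have h1t : (0:ℝ) < 1 - t := by linarith [ht.2]
    exact mul_pos (mul_pos (mul_pos hjpos (pow_pos ht.1 _)) h1t)
      (by linarith [hLgt t ht])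
  have hlogH : ∀ t ∈ Set.Ioo (0:ℝ) 1, Real.log (H t) =
      Real.log j + (((j:ℝ) - 1) * Real.log t + Real.log (1 - t) +
        Real.log (Real.log 3 - Real.log (1 - t))) := by
    intro t ht
    have h1t : (0:ℝ) < 1 - t := by linarith [ht.2]
    have hd : Real.log (3 / (1 - t)) ≠ 0 := by linarith [hLgt t ht]
    have ha : (j:ℝ) ≠ 0 := hjpos.ne'
    have hb : t ^ (j - 1) ≠ 0 := pow_ne_zero _ ht.1.ne'
    simp only [hHdef]
    rw [Real.log_mul (mul_ne_zero (mul_ne_zero ha hb) h1t.ne') hd,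
      Real.log_mul (mul_ne_zero ha hb) h1t.ne', Real.log_mul ha hb,
      Real.log_pow, hdiv t ht]
    have hcast : ((j - 1 : ℕ) : ℝ) = (j:ℝ) - 1 := by
      push_cast [Nat.cast_sub (show 1 ≤ j by omega)]
      ring
    rw [hcast]
    ring
  -- existence via the continuous extension G
  set G : ℝ → ℝ := fun t => (j : ℝ) * t ^ (j - 1) *
      ((1 - t) * Real.log 3 - (1 - t) * Real.log (1 - t)) with hGdef
  have hGcont : Continuous G := by
    refine (continuous_const.mul (continuous_pow _)).mul ?_
    exact ((continuous_const.sub continuous_id).mul continuous_const).sub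
      (Real.continuous_mul_log.comp (continuous_const.sub continuous_id))
  have hGH : ∀ t ∈ Set.Ioo (0:ℝ) 1, G t = H t := by
    intro t ht
    simp only [hGdef, hHdef]
    rw [hdiv t ht]
    ring
  obtain ⟨t₀, ht₀I, hmax⟩ := isCompact_Icc.exists_isMaxOn
    (Set.nonempty_Icc.2 zero_le_one) hGcont.continuousOn
  have hhalf : (1/2 : ℝ) ∈ Set.Ioo (0:ℝ) 1 := by norm_num
  have hGhalf : 0 < G (1/2) := by rw [hGH _ hhalf]; exact hHpos _ hhalf
  have hle : G (1/2) ≤ G t₀ := hmax (by norm_num : (1/2:ℝ) ∈ Set.Icc (0:ℝ) 1)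
  have ht₀ : t₀ ∈ Set.Ioo (0:ℝ) 1 := by
    constructor
    · rcases lt_or_eq_of_le ht₀I.1 with h | h
      · exact h
      · exfalso
        have : G t₀ = 0 := by
          simp only [hGdef, ← h, zero_pow (show j - 1 ≠ 0 by omega)]
          ring
        linarith
    · rcases lt_or_eq_of_le ht₀I.2 with h | h
      · exact h
      · exfalso
        have : G t₀ = 0 := by
          simp only [hGdef, h]
          norm_num
        linarith
  have hmaxH : ∀ s ∈ Set.Ioo (0:ℝ) 1, H s ≤ H t₀ := by
    intro s hs
    rw [← hGH s hs, ← hGH t₀ ht₀]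
    exact hmax (Set.Ioo_subset_Icc_self hs)
  refine ⟨t₀, ⟨ht₀, hmaxH⟩, ?_⟩
  rintro y ⟨hy, hymax⟩
  by_contra hne
  have hHeq : H y = H t₀ := le_antisymm (hmaxH y hy) (hymax t₀ ht₀)
  have hconc := aux_concave hj1
  have hmem : (1/2 : ℝ) • y + (1/2 : ℝ) • t₀ ∈ Set.Ioo (0:ℝ) 1 :=
    hconc.1 hy ht₀ (by norm_num) (by norm_num) (by norm_num)
  have hlt := hconc.2 hy ht₀ hne (by norm_num : (0:ℝ) < 1/2)
    (by norm_num : (0:ℝ) < 1/2) (by norm_num)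
  set m : ℝ := (1/2 : ℝ) • y + (1/2 : ℝ) • t₀ with hmdef
  have hg1eq : ((j:ℝ) - 1) * Real.log y + Real.log (1 - y) +
      Real.log (Real.log 3 - Real.log (1 - y)) =
      ((j:ℝ) - 1) * Real.log t₀ + Real.log (1 - t₀) +
      Real.log (Real.log 3 - Real.log (1 - t₀)) := by
    have h1 := hlogH y hy
    have h2 := hlogH t₀ ht₀
    rw [hHeq] at h1
    linarith [h1, h2]
  have hgm : ((j:ℝ) - 1) * Real.log y + Real.log (1 - y) +
      Real.log (Real.log 3 - Real.log (1 - y)) <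
      ((j:ℝ) - 1) * Real.log m + Real.log (1 - m) +
      Real.log (Real.log 3 - Real.log (1 - m)) := by
    have := hlt
    simp only [smul_eq_mul] at this
    rw [hg1eq] at this ⊢
    linarith
  have hlogHlt : Real.log (H y) < Real.log (H m) := by
    rw [hlogH y hy, hlogH m hmem]
    linarith
  have hHlt : H y < H m :=
    (Real.log_lt_log_iff (hHpos y hy) (hHpos m hmem)).1 hlogHlt
  have : H m ≤ H y := hymax m hmem
  linarith
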